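/- Let V : [0,∞) → ℝ≥0 be absolutely continuous satisfying V'(t) ≤ -μ V(t) + q·sup_{s∈[max(t-Δ,0),t]} V(s) for almost every t, with μ > q > 0 and Δ > 0. Then there exists λ > 0 (any λ > 0 satisfying λ ≤ μ - q·e^{λΔ}) such that V(t) ≤ (sup_{s∈[0,Δ]} V(s))·e^{-λ(t-Δ)} for all t ≥ Δ. -/

import Mathlib

open Set MeasureTheory intervalIntegral Real

/-- A.e. derivative satisfying FTC with a one-sided a.e. bound is locally integrable. -/
lemma halanay_integrableOn
    (V V' : ℝ → ℝ) (K b : ℝ) (hb : 0 ≤ b) (hKpos : 0 ≤ K)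
    (hVpos : ∀ t ∈ Icc (0:ℝ) b, 0 ≤ V t)
    (hderiv : ∀ᵐ t ∂(volume.restrict (Ici (0:ℝ))), HasDerivAt V (V' t) t)
    (hFTC : ∀ t : ℝ, 0 ≤ t → V t - V 0 = ∫ s in (0:ℝ)..t, V' s)
    (hK : ∀ᵐ t ∂(volume.restrict (Ioc (0:ℝ) b)), V' t ≤ K) :
    IntegrableOn V' (Ioc 0 b) volume := by
  have hVd : V' =ᵐ[volume.restrict (Ici (0:ℝ))] deriv V :=
    hderiv.mono fun t ht => ht.deriv.symm
  set g₀ : ℝ → ENNReal := fun t => ENNReal.ofReal (K - deriv V t) with hg₀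
  have hg₀m : Measurable g₀ := ((measurable_deriv V).const_sub K).ennreal_ofReal
  set ν : Measure ℝ := volume.withDensity g₀ with hν
  set S : Set ℝ := {t : ℝ | t ∈ Icc 0 b ∧ IntegrableOn V' (Ioc 0 t) volume} with hS
  have h0S : (0:ℝ) ∈ S := by
    refine ⟨⟨le_refl _, hb⟩, ?_⟩
    simp [IntegrableOn]
  have hbdd : BddAbove S := ⟨b, fun x hx => hx.1.2⟩
  set τ := sSup S with hτ
  have hτ0 : 0 ≤ τ := le_csSup hbdd h0S
  have hτb : τ ≤ b := csSup_le ⟨0, h0S⟩ fun x hx => hx.1.2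
  -- downward closure of S
  have hdc : ∀ t : ℝ, 0 ≤ t → t < τ → IntegrableOn V' (Ioc 0 t) volume := by
    intro t ht0 htτ
    obtain ⟨s, hsS, hts⟩ := exists_lt_of_lt_csSup ⟨0, h0S⟩ htτ
    exact hsS.2.mono_set (Ioc_subset_Ioc_right hts.le)
  -- uniform bound on ν over members of S
  have hmem : ∀ t : ℝ, 0 ≤ t → t ≤ b → IntegrableOn V' (Ioc 0 t) volume →
      ν (Ioc 0 t) ≤ ENNReal.ofReal (K * b + V 0) := by
    intro t ht0 htb hVint
    have hsub1 : Ioc (0:ℝ) t ⊆ Ici 0 := fun x hx => hx.1.le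
    have hsub2 : Ioc (0:ℝ) t ⊆ Ioc 0 b := Ioc_subset_Ioc_right htb
    have haeK : ∀ᵐ s ∂(volume.restrict (Ioc (0:ℝ) t)), V' s ≤ K :=
      ae_restrict_of_ae_restrict_of_subset hsub2 hK
    have haed : V' =ᵐ[volume.restrict (Ioc (0:ℝ) t)] deriv V :=
      ae_restrict_of_ae_restrict_of_subset hsub1 hVd
    have hconst : IntegrableOn (fun _ : ℝ => K) (Ioc 0 t) volume :=
      integrableOn_const measure_Ioc_lt_top.ne
    have hint : IntegrableOn (fun s => K - V' s) (Ioc 0 t) volume := hconst.sub hVint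
    have hnn : 0 ≤ᵐ[volume.restrict (Ioc (0:ℝ) t)] fun s => K - V' s :=
      haeK.mono fun s h => sub_nonneg.2 h
    have h1 : ENNReal.ofReal (∫ s in Ioc (0:ℝ) t, (K - V' s)) =
        ∫⁻ s in Ioc (0:ℝ) t, ENNReal.ofReal (K - V' s) :=
      ofReal_integral_eq_lintegral_ofReal hint hnn
    have h2 : ν (Ioc 0 t) = ∫⁻ s in Ioc (0:ℝ) t, ENNReal.ofReal (K - V' s) := by
      rw [hν, withDensity_apply _ measurableSet_Ioc]
      exact (lintegral_congr_ae (haed.mono fun s h => by rw [hg₀, h])).symm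
    have h3 : ∫ s in Ioc (0:ℝ) t, (K - V' s) = K * t - (V t - V 0) := by
      rw [integral_sub hconst hVint]
      have e1 : ∫ _ in Ioc (0:ℝ) t, K = K * t := by
        simp [Real.volume_Ioc, ENNReal.toReal_ofReal ht0, mul_comm, ht0]
      have e2 : ∫ s in Ioc (0:ℝ) t, V' s = V t - V 0 := by
        rw [← intervalIntegral.integral_of_le ht0]; exact (hFTC t ht0).symm
      rw [e1, e2]
    have h4 : K * t - (V t - V 0) ≤ K * b + V 0 := by
      have h5 : K * t ≤ K * b := mul_le_mul_of_nonneg_left htb hKpos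
      nlinarith [hVpos t ⟨ht0, htb⟩]
    rw [h2, ← h1, h3]
    exact ENNReal.ofReal_le_ofReal h4
  -- integrability up to τ
  have claim1 : IntegrableOn V' (Ioc 0 τ) volume := by
    rcases eq_or_lt_of_le hτ0 with h | h
    · rw [← h]; simp [IntegrableOn]
    · set tn : ℕ → ℝ := fun n => τ - τ / (n + 1) with htn
      have htn_mem : ∀ n : ℕ, 0 ≤ tn n ∧ tn n < τ := by
        intro n
        have h1 : (0:ℝ) < (n:ℝ) + 1 := by positivity
        constructor
        · have : τ / ((n:ℝ) + 1) ≤ τ := by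
            apply div_le_self hτ0
            simp
        
          simpa [htn] using sub_nonneg.2 this
        · have : 0 < τ / ((n:ℝ) + 1) := div_pos h h1
          simp only [htn]; linarith
      have hcover : Ioo (0:ℝ) τ ⊆ ⋃ n, Ioc (0:ℝ) (tn n) := by
        intro x hx
        have hpos : 0 < τ - x := sub_pos.2 hx.2
        obtain ⟨n, hn⟩ := exists_nat_gt (τ / (τ - x))
        refine mem_iUnion.2 ⟨n, hx.1, ?_⟩
        have h1 : (0:ℝ) < (n:ℝ) + 1 := by positivity
        have h2 : τ / ((n:ℝ) + 1) < τ - x := by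
          rw [div_lt_iff₀ h1]
          have h3 : τ / (τ - x) < (n:ℝ) + 1 := lt_of_lt_of_le hn (by linarith)
          calc τ = (τ / (τ - x)) * (τ - x) := by field_simp
          _ < ((n:ℝ) + 1) * (τ - x) := mul_lt_mul_of_pos_right h3 hpos
          _ = (τ - x) * ((n:ℝ) + 1) := by ring
        simp only [htn]; linarith
      have hmono : Monotone fun n : ℕ => Ioc (0:ℝ) (tn n) := by
        intro n m hnm
        apply Ioc_subset_Ioc_right
        simp only [htn]
        have hd : τ / ((m:ℝ) + 1) ≤ τ / ((n:ℝ) + 1) := by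
          gcongr
        linarith
      have hνIoo : ν (Ioo 0 τ) ≤ ENNReal.ofReal (K * b + V 0) := by
        calc ν (Ioo 0 τ) ≤ ν (⋃ n, Ioc (0:ℝ) (tn n)) := measure_mono hcover
          _ = ⨆ n, ν (Ioc 0 (tn n)) := hmono.measure_iUnion
          _ ≤ ENNReal.ofReal (K * b + V 0) := by
              refine iSup_le fun n => ?_
              exact hmem _ (htn_mem n).1 (le_trans (htn_mem n).2.le hτb)
                (hdc _ (htn_mem n).1 (htn_mem n).2)
      have hντ : ν (Ioc 0 τ) < ⊤ := by
        have hsplit : Ioc (0:ℝ) τ ⊆ Ioo 0 τ ∪ {τ} := by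
          intro x hx
          rcases eq_or_lt_of_le hx.2 with h' | h'
          · exact Or.inr (by simp [h'])
          · exact Or.inl ⟨hx.1, h'⟩
        have hsing : ν {τ} = 0 :=
          withDensity_absolutelyContinuous volume g₀ Real.volume_singleton
        calc ν (Ioc 0 τ) ≤ ν (Ioo 0 τ ∪ {τ}) := measure_mono hsplit
          _ ≤ ν (Ioo 0 τ) + ν {τ} := measure_union_le _ _
          _ ≤ ENNReal.ofReal (K * b + V 0) + 0 := by
              exact add_le_add hνIoo (le_of_eq hsing)
          _ < ⊤ := by simp [ENNReal.ofReal_lt_top]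
      -- convert ν-finiteness to integrability
      have hsub1 : Ioc (0:ℝ) τ ⊆ Ici 0 := fun x hx => hx.1.le
      have haed : V' =ᵐ[volume.restrict (Ioc (0:ℝ) τ)] deriv V :=
        ae_restrict_of_ae_restrict_of_subset hsub1 hVd
      have haeK : ∀ᵐ s ∂(volume.restrict (Ioc (0:ℝ) τ)), V' s ≤ K :=
        ae_restrict_of_ae_restrict_of_subset (Ioc_subset_Ioc_right hτb) hK
      have hmeas : AEStronglyMeasurable (fun s => K - V' s) (volume.restrict (Ioc (0:ℝ) τ)) := by
        refine (((measurable_deriv V).const_sub K).aestronglyMeasurable).congr ?_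
        exact haed.mono fun s h => by simp [h]
      have hfin : HasFiniteIntegral (fun s => K - V' s) (volume.restrict (Ioc (0:ℝ) τ)) := by
        rw [hasFiniteIntegral_iff_ofReal (haeK.mono fun s h => sub_nonneg.2 h)]
        have : ∫⁻ s in Ioc (0:ℝ) τ, ENNReal.ofReal (K - V' s) = ν (Ioc 0 τ) := by
          rw [hν, withDensity_apply _ measurableSet_Ioc]
          exact lintegral_congr_ae (haed.mono fun s h => by simp [hg₀, h])
        rw [this]; exact hντ
      have hintKV : IntegrableOn (fun s => K - V' s) (Ioc 0 τ) volume := ⟨hmeas, hfin⟩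
      have hconst : IntegrableOn (fun _ : ℝ => K) (Ioc 0 τ) volume :=
        integrableOn_const measure_Ioc_lt_top.ne
      have : IntegrableOn (fun s => K - (K - V' s)) (Ioc 0 τ) volume := hconst.sub hintKV
      simpa using this
  -- τ = b
  have claim2 : τ = b := by
    by_contra hne
    have hτlt : τ < b := lt_of_le_of_ne hτb hne
    have hconstV : ∀ u : ℝ, τ < u → u ≤ b → V u = V 0 := by
      intro u h1 h2
      have hu0 : 0 ≤ u := le_trans hτ0 h1.le
      have hni : ¬ IntegrableOn V' (Ioc 0 u) volume := by
        intro hint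
        exact absurd (le_csSup hbdd ⟨⟨hu0, h2⟩, hint⟩) (not_le.2 h1)
      have hni2 : ¬ IntervalIntegrable V' volume 0 u := by
        intro h
        exact hni ((intervalIntegrable_iff_integrableOn_Ioc_of_le hu0).1 h)
      have := hFTC u hu0
      rw [intervalIntegral.integral_undef hni2] at this
      linarith
    have hzero : ∀ᵐ s ∂(volume.restrict (Ioo τ b)), V' s = 0 := by
      have hsub : Ioo τ b ⊆ Ici (0:ℝ) := fun x hx => le_trans hτ0 hx.1.le
      have h1 : ∀ᵐ s ∂(volume.restrict (Ioo τ b)), HasDerivAt V (V' s) s :=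
        ae_restrict_of_ae_restrict_of_subset hsub hderiv
      filter_upwards [h1, ae_restrict_mem measurableSet_Ioo] with s hs hsmem
      have hev : (fun _ : ℝ => V 0) =ᶠ[nhds s] V := by
        refine Filter.eventuallyEq_of_mem (isOpen_Ioo.mem_nhds hsmem) ?_
        intro x hx
        exact (hconstV x hx.1 hx.2.le).symm
      exact ((hs.congr_of_eventuallyEq hev).unique (hasDerivAt_const s (V 0)))
    set t' := (τ + b) / 2 with ht'
    have hτt' : τ < t' := by simp only [ht']; linarith
    have ht'b : t' < b := by simp only [ht']; linarith
    have hint2 : IntegrableOn V' (Ioc τ t') volume := by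
      refine (integrable_zero _ _ _).congr ?_
      have hsub : Ioc τ t' ⊆ Ioo τ b := fun x hx => ⟨hx.1, lt_of_le_of_lt hx.2 ht'b⟩
      exact (ae_restrict_of_ae_restrict_of_subset hsub hzero).mono fun s h => h.symm
    have hintall : IntegrableOn V' (Ioc 0 t') volume := by
      rw [← Ioc_union_Ioc_eq_Ioc hτ0 hτt'.le]
      exact claim1.union hint2
    exact absurd (le_csSup hbdd ⟨⟨le_trans hτ0 hτt'.le, ht'b.le⟩, hintall⟩) (not_le.2 hτt')
  rw [← claim2]; exact claim1

set_option maxHeartbeats 1000000 in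
/-- Classical Halanay inequality: if `V : [0,∞) → ℝ≥0` is absolutely continuous with
`V' t ≤ -μ V t + q · sup_{s ∈ [max(t-Δ,0), t]} V s` a.e., `μ > q > 0`, `Δ > 0`, then
there exists `λ > 0` with `λ ≤ μ - q e^{λΔ}` such that
`V t ≤ (sup_{s ∈ [0,Δ]} V s) · e^{-λ(t-Δ)}` for all `t ≥ Δ`. -/
theorem stmt5 (μ q Δ : ℝ) (hq : 0 < q) (hμq : q < μ) (hΔ : 0 < Δ)
    (V V' : ℝ → ℝ)
    (hVnonneg : ∀ t : ℝ, 0 ≤ t → 0 ≤ V t)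
    (hcont : ContinuousOn V (Ici 0))
    (hderiv : ∀ᵐ t ∂(volume.restrict (Ici (0:ℝ))), HasDerivAt V (V' t) t)
    (hFTC : ∀ t : ℝ, 0 ≤ t → V t - V 0 = ∫ s in (0:ℝ)..t, V' s)
    (hineq : ∀ᵐ t ∂(volume.restrict (Ici (0:ℝ))),
      V' t ≤ -μ * V t + q * sSup (V '' Icc (max (t - Δ) 0) t)) :
    ∃ lam : ℝ, 0 < lam ∧ lam ≤ μ - q * exp (lam * Δ) ∧
      ∀ t : ℝ, Δ ≤ t → V t ≤ (sSup (V '' Icc 0 Δ)) * exp (-lam * (t - Δ)) := by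
  have hμ0 : 0 < μ := hq.trans hμq
  -- choose lam
  obtain ⟨lam, hlam0, hlam⟩ : ∃ lam : ℝ, 0 < lam ∧ lam ≤ μ - q * exp (lam * Δ) := by
    have hc : ContinuousAt (fun l : ℝ => μ - q * exp (l * Δ) - l) 0 := by fun_prop
    have h0 : (0:ℝ) < μ - q * exp (0 * Δ) - 0 := by simp; linarith
    have hev : ∀ᶠ l in nhds (0:ℝ), 0 < μ - q * exp (l * Δ) - l :=
      hc.eventually (eventually_gt_nhds h0)
    obtain ⟨lam, h1, h2⟩ :=
      ((hev.filter_mono nhdsWithin_le_nhds).and self_mem_nhdsWithin).exists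
        (f := nhdsWithin (0:ℝ) (Ioi 0))
    exact ⟨lam, h2, by linarith⟩
  refine ⟨lam, hlam0, hlam, ?_⟩
  set M := sSup (V '' Icc 0 Δ) with hM
  have hbddM : BddAbove (V '' Icc 0 Δ) :=
    (isCompact_Icc.image_of_continuousOn (hcont.mono fun x hx => hx.1)).bddAbove
  have hMb : ∀ u ∈ Icc (0:ℝ) Δ, V u ≤ M := fun u hu => le_csSup hbddM (mem_image_of_mem V hu)
  have hM0 : 0 ≤ M := le_trans (hVnonneg 0 le_rfl) (hMb 0 ⟨le_rfl, hΔ.le⟩)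
  -- key estimate with ε
  have key : ∀ ε : ℝ, 0 < ε → ∀ t, Δ ≤ t → V t ≤ (M + ε) * exp (-lam * (t - Δ)) := by
    intro ε hε
    by_contra hcon
    push_neg at hcon
    obtain ⟨t₁, ht₁Δ, ht₁⟩ := hcon
    set Φ : ℝ → ℝ := fun s => (M + ε) * exp (-lam * (s - Δ)) with hΦ
    have hΦpos : ∀ s, 0 < Φ s := fun s => mul_pos (by linarith) (exp_pos _)
    have hΦcont : Continuous Φ := by fun_prop
    set S : Set ℝ := {u : ℝ | Δ ≤ u ∧ Φ u < V u} with hS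
    have hSne : S.Nonempty := ⟨t₁, ht₁Δ, ht₁⟩
    have hSbd : BddBelow S := ⟨Δ, fun x hx => hx.1⟩
    set t₀ := sInf S with ht₀def
    have ht₀Δ : Δ ≤ t₀ := le_csInf hSne fun x hx => hx.1
    have ht₀0 : (0:ℝ) ≤ t₀ := hΔ.le.trans ht₀Δ
    have hlt : ∀ u, Δ ≤ u → u < t₀ → V u ≤ Φ u := by
      intro u hu hut
      by_contra h
      exact absurd (csInf_le hSbd ⟨hu, not_le.1 h⟩) (not_le.2 hut)
    have ht₀mem : Φ t₀ ≤ V t₀ := by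
      have hcl : t₀ ∈ closure S := csInf_mem_closure hSne hSbd
      obtain ⟨x, hxS, hxlim⟩ := mem_closure_iff_seq_limit.1 hcl
      have hVlim : Filter.Tendsto (V ∘ x) Filter.atTop (nhds (V t₀)) := by
        have h1 : ContinuousWithinAt V (Ici 0) t₀ := hcont t₀ ht₀0
        refine h1.tendsto.comp ?_
        rw [tendsto_nhdsWithin_iff]
        exact ⟨hxlim, Filter.Eventually.of_forall fun n => hΔ.le.trans (hxS n).1⟩
      have hΦlim : Filter.Tendsto (Φ ∘ x) Filter.atTop (nhds (Φ t₀)) :=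
        (hΦcont.tendsto _).comp hxlim
      exact le_of_tendsto_of_tendsto' hΦlim hVlim fun n => (hxS n).2.le
    have hΔt₀ : Δ < t₀ := by
      rcases eq_or_lt_of_le ht₀Δ with h | h
      · exfalso
        have h1 : Φ Δ = M + ε := by simp [hΦ]
        have h2 := hMb Δ ⟨hΔ.le, le_rfl⟩
        rw [← h] at ht₀mem
        rw [h1] at ht₀mem
        linarith
      · exact h
    -- integrability of V' on [0, t₀]
    obtain ⟨xm, hxm, hxmax⟩ := isCompact_Icc.exists_isMaxOn
      (⟨0, le_rfl, ht₀0⟩ : (Icc (0:ℝ) t₀).Nonempty) (hcont.mono fun x hx => hx.1)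
    set C := V xm with hC
    have hCb : ∀ u ∈ Icc (0:ℝ) t₀, V u ≤ C := fun u hu => hxmax hu
    have hC0 : 0 ≤ C := le_trans (hVnonneg 0 le_rfl) (hCb 0 ⟨le_rfl, ht₀0⟩)
    have hKae : ∀ᵐ s ∂(volume.restrict (Ioc (0:ℝ) t₀)), V' s ≤ q * C := by
      have h1 := ae_restrict_of_ae_restrict_of_subset
        (fun x (hx : x ∈ Ioc (0:ℝ) t₀) => hx.1.le) hineq
      filter_upwards [h1, ae_restrict_mem measurableSet_Ioc] with s hs hsm
      have hsup : sSup (V '' Icc (max (s - Δ) 0) s) ≤ C := by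
        apply Real.sSup_le _ hC0
        rintro x ⟨u, hu, rfl⟩
        exact hCb u ⟨le_trans (le_max_right _ _) hu.1, hu.2.trans hsm.2⟩
      have hVs : 0 ≤ V s := hVnonneg s hsm.1.le
      linarith [mul_le_mul_of_nonneg_left hsup hq.le, mul_nonneg hμ0.le hVs]
    have hIntOn : IntegrableOn V' (Ioc 0 t₀) volume :=
      halanay_integrableOn V V' (q * C) t₀ ht₀0 (by positivity)
        (fun u hu => hVnonneg u hu.1) hderiv hFTC hKae
    have hII : ∀ a' b' : ℝ, 0 ≤ a' → a' ≤ b' → b' ≤ t₀ → IntervalIntegrable V' volume a' b' := by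
      intro a' b' h1 h2 h3
      rw [intervalIntegrable_iff_integrableOn_Ioc_of_le h2]
      exact hIntOn.mono_set (Ioc_subset_Ioc h1 h3)
    have hFTC2 : ∀ t, 0 ≤ t → t ≤ t₀ → V t₀ - V t = ∫ s in t..t₀, V' s := by
      intro t h1 h2
      have e1 := hFTC t h1
      have e2 := hFTC t₀ ht₀0
      have e3 := intervalIntegral.integral_add_adjacent_intervals
        (hII 0 t le_rfl h1 (h2.trans le_rfl)) (hII t t₀ h1 h2 le_rfl)
      linarith
    -- derivative of Φ
    have hΦd : ∀ s : ℝ, HasDerivAt Φ (-lam * Φ s) s := by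
      intro s
      have h1 : HasDerivAt (fun u : ℝ => -lam * (u - Δ)) (-lam * 1) s :=
        ((hasDerivAt_id s).sub_const Δ).const_mul (-lam)
      have h2 := (h1.exp).const_mul (M + ε)
      refine h2.congr_deriv ?_
      show _ = -lam * ((M + ε) * exp (-lam * (s - Δ)))
      ring
    have hΦFTC : ∀ t, t ≤ t₀ → Φ t₀ - Φ t = ∫ s in t..t₀, -lam * Φ s := by
      intro t h
      exact (intervalIntegral.integral_eq_sub_of_hasDerivAt (fun s _ => hΦd s)
        ((continuous_const.mul hΦcont).intervalIntegrable _ _)).symm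
    -- key integral inequality
    have hkey : ∀ t, Δ ≤ t → t ≤ t₀ → Φ t - V t ≤ μ * ∫ s in t..t₀, (Φ s - V s) := by
      intro t h1 h2
      have ht0 : (0:ℝ) ≤ t := hΔ.le.trans h1
      have hsub : Icc t t₀ ⊆ Ici (0:ℝ) := fun x hx => ht0.trans hx.1
      have hae : (fun s => -μ * (Φ s - V s)) ≤ᵐ[volume.restrict (Icc t t₀)]
          fun s => -lam * Φ s - V' s := by
        have h3 := ae_restrict_of_ae_restrict_of_subset hsub hineq
        have h4 : ∀ᵐ s ∂(volume.restrict (Icc t t₀)), s ≠ t₀ := by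
          refine ae_restrict_of_ae ?_
          have he : {s : ℝ | ¬ s ≠ t₀} = {t₀} := by ext; simp
          rw [ae_iff, he]
          exact Real.volume_singleton
        filter_upwards [h3, h4, ae_restrict_mem measurableSet_Icc] with s hs hsne hsm
        have hst₀ : s < t₀ := lt_of_le_of_ne hsm.2 hsne
        have hsΔ : Δ ≤ s := h1.trans hsm.1
        have hsup : sSup (V '' Icc (max (s - Δ) 0) s) ≤ exp (lam * Δ) * Φ s := by
          apply Real.sSup_le _ (by positivity)
          rintro x ⟨u, hu, rfl⟩
          have hu0 : 0 ≤ u := le_trans (le_max_right _ _) hu.1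
          have huΔ' : s - Δ ≤ u := le_trans (le_max_left _ _) hu.1
          have hVu : V u ≤ (M + ε) * exp (-lam * (u - Δ)) := by
            rcases le_or_gt u Δ with hc | hc
            · have hVM : V u ≤ M := hMb u ⟨hu0, hc⟩
              have h5 : (1:ℝ) ≤ exp (-lam * (u - Δ)) := by
                apply Real.one_le_exp
                have := mul_nonneg hlam0.le (sub_nonneg.2 hc)
                linarith
              have := mul_le_mul_of_nonneg_left h5 (show (0:ℝ) ≤ M + ε by linarith)
              linarith
            · exact hlt u hc.le (lt_of_le_of_lt hu.2 hst₀)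
          have h6 : exp (-lam * (u - Δ)) ≤ exp (lam * Δ) * exp (-lam * (s - Δ)) := by
            rw [← Real.exp_add]
            apply Real.exp_le_exp.2
            have := mul_le_mul_of_nonneg_left (show s - u ≤ Δ by linarith) hlam0.le
            linarith
          calc V u ≤ (M + ε) * exp (-lam * (u - Δ)) := hVu
            _ ≤ (M + ε) * (exp (lam * Δ) * exp (-lam * (s - Δ))) :=
                mul_le_mul_of_nonneg_left h6 (by linarith)
            _ = exp (lam * Δ) * Φ s := by simp only [hΦ]; ring
        have hΦs := hΦpos s
        have hVs : 0 ≤ V s := hVnonneg s (ht0.trans hsm.1)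
        have h8 : q * sSup (V '' Icc (max (s - Δ) 0) s) ≤ (q * exp (lam * Δ)) * Φ s := by
          have h8' := mul_le_mul_of_nonneg_left hsup hq.le
          rw [← mul_assoc] at h8'
          exact h8'
        have h9 : (q * exp (lam * Δ)) * Φ s ≤ (μ - lam) * Φ s := by
          apply mul_le_mul_of_nonneg_right _ hΦs.le
          linarith
        have h7 : V' s ≤ -μ * V s + (μ - lam) * Φ s := by linarith
        show -μ * (Φ s - V s) ≤ -lam * Φ s - V' s
        linarith
      have huIcc : uIcc t t₀ = Icc t t₀ := uIcc_of_le h2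
      have hVcont : ContinuousOn V (uIcc t t₀) := by
        rw [huIcc]; exact hcont.mono hsub
      have hflow : IntervalIntegrable (fun s => -μ * (Φ s - V s)) volume t t₀ := by
        apply ContinuousOn.intervalIntegrable
        exact continuousOn_const.mul ((hΦcont.continuousOn).sub hVcont)
      have hVV : IntervalIntegrable V' volume t t₀ := hII t t₀ ht0 h2 le_rfl
      have hhigh : IntervalIntegrable (fun s => -lam * Φ s - V' s) volume t t₀ :=
        ((continuous_const.mul hΦcont).intervalIntegrable _ _).sub hVV
      have hmono := intervalIntegral.integral_mono_ae_restrict h2 hflow hhigh hae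
      have hsplit : ∫ s in t..t₀, (-lam * Φ s - V' s) = (Φ t₀ - Φ t) - (V t₀ - V t) := by
        rw [intervalIntegral.integral_sub (f := fun s => -lam * Φ s)
          ((continuous_const.mul hΦcont).intervalIntegrable _ _) hVV,
          ← hΦFTC t h2, ← hFTC2 t ht0 h2]
      have hpull : ∫ s in t..t₀, (-μ * (Φ s - V s)) = -μ * ∫ s in t..t₀, (Φ s - V s) :=
        intervalIntegral.integral_const_mul _ _
      rw [hsplit, hpull] at hmono
      linarith
    -- iteration
    have hind : ∀ n : ℕ, ∀ t, Δ ≤ t → t ≤ t₀ →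
        Φ t - V t ≤ (M + ε) * ((μ * (t₀ - t)) ^ n / n.factorial) := by
      intro n
      induction n with
      | zero =>
        intro t h1 h2
        simp only [pow_zero, Nat.factorial_zero, Nat.cast_one, div_one, mul_one]
        have he1 : exp (-lam * (t - Δ)) ≤ 1 := by
          apply Real.exp_le_one_iff.2
          have := mul_nonneg hlam0.le (sub_nonneg.2 h1)
          linarith
        have he2 : Φ t ≤ M + ε := by
          have := mul_le_mul_of_nonneg_left he1 (show (0:ℝ) ≤ M + ε by linarith)
          simp only [hΦ]
          linarith
        have := hVnonneg t (hΔ.le.trans h1)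
        linarith
      | succ n ih =>
        intro t h1 h2
        have step1 := hkey t h1 h2
        have hfacpos : (0:ℝ) < n.factorial := by
          exact_mod_cast Nat.factorial_pos n
        have step2 : ∫ s in t..t₀, (Φ s - V s) ≤
            ∫ s in t..t₀, (M + ε) * μ ^ n / n.factorial * (t₀ - s) ^ n := by
          apply intervalIntegral.integral_mono_on h2
          · apply ContinuousOn.intervalIntegrable
            apply (hΦcont.continuousOn).sub
            rw [uIcc_of_le h2]
            exact hcont.mono fun x hx => (hΔ.le.trans (h1.trans hx.1))
          · apply Continuous.intervalIntegrable
            fun_prop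
          · intro s hs
            have h3 := ih s (h1.trans hs.1) hs.2
            calc Φ s - V s ≤ (M + ε) * ((μ * (t₀ - s)) ^ n / n.factorial) := h3
              _ = (M + ε) * μ ^ n / n.factorial * (t₀ - s) ^ n := by
                  rw [mul_pow]; ring
        have step3 : ∫ s in t..t₀, (M + ε) * μ ^ n / n.factorial * (t₀ - s) ^ n
            = (M + ε) * μ ^ n / n.factorial * ((t₀ - t) ^ (n + 1) / (n + 1)) := by
          rw [intervalIntegral.integral_const_mul]
          congr 1
          have h4 := intervalIntegral.integral_comp_sub_left (a := t) (b := t₀)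
            (fun u : ℝ => u ^ n) t₀
          rw [h4]
          simp [integral_pow]
        have hfac : (((n + 1).factorial : ℝ)) = (n + 1) * n.factorial := by
          push_cast [Nat.factorial_succ]
          ring
        calc Φ t - V t ≤ μ * ∫ s in t..t₀, (Φ s - V s) := step1
          _ ≤ μ * ((M + ε) * μ ^ n / n.factorial * ((t₀ - t) ^ (n + 1) / (n + 1))) := by
              rw [← step3]
              exact mul_le_mul_of_nonneg_left step2 hμ0.le
          _ = (M + ε) * ((μ * (t₀ - t)) ^ (n + 1) / (n + 1).factorial) := by
              rw [hfac, mul_pow]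
              have hn1 : ((n:ℝ) + 1) ≠ 0 := by positivity
              field_simp
              ring
    -- contradiction
    have hlim : Filter.Tendsto
        (fun n : ℕ => (M + ε) * ((μ * (t₀ - Δ)) ^ n / n.factorial))
        Filter.atTop (nhds 0) := by
      have h5 := FloorSemiring.tendsto_pow_div_factorial_atTop (μ * (t₀ - Δ))
      have := h5.const_mul (M + ε)
      simpa using this
    have hge : Φ Δ - V Δ ≤ 0 :=
      ge_of_tendsto' hlim fun n => hind n Δ le_rfl ht₀Δ
    have hΦΔ : Φ Δ = M + ε := by simp [hΦ]
    have := hMb Δ ⟨hΔ.le, le_rfl⟩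
    linarith
  -- conclude
  intro t ht
  have hexp1 : exp (-lam * (t - Δ)) ≤ 1 := by
    apply Real.exp_le_one_iff.2
    have := mul_nonneg hlam0.le (sub_nonneg.2 ht)
    linarith
  have hexp0 : 0 < exp (-lam * (t - Δ)) := exp_pos _
  refine le_of_forall_pos_le_add ?_
  intro ε hε
  have h1 := key ε hε t ht
  have h2 := mul_le_mul_of_nonneg_left hexp1 hε.le
  linarith
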